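/- Let Σ and Δ be simplicial complexes in ℝⁿ with Δ a subdivision of Σ (same support, every simplex of Δ contained in a simplex of Σ). Then every simplex σ of Σ equals the union of the simplices of Δ contained in σ. -/

import Mathlib

open Geometry Finset

private lemma mem_convexHull_finset' {E : Type*} [AddCommGroup E] [Module ℝ E]
    {s : Finset E} {x : E} :
    x ∈ convexHull ℝ (s : Set E) ↔
      ∃ w : E → ℝ, (∀ y ∈ s, 0 ≤ w y) ∧ ∑ y ∈ s, w y = 1 ∧ ∑ y ∈ s, w y • y = x := by
  rw [Finset.convexHull_eq]
  constructor
  · rintro ⟨w, h0, h1, hx⟩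
    refine ⟨w, h0, h1, ?_⟩
    rw [← hx, Finset.centerMass_eq_of_sum_1 _ _ h1]
    simp
  · rintro ⟨w, h0, h1, hx⟩
    refine ⟨w, h0, h1, ?_⟩
    rw [Finset.centerMass_eq_of_sum_1 _ _ h1]
    simpa using hx

private lemma unique_w' {E : Type*} [AddCommGroup E] [Module ℝ E] {s : Finset E}
    (hs : AffineIndependent ℝ ((↑) : s → E)) {w₁ w₂ : E → ℝ}
    (h1 : ∑ y ∈ s, w₁ y = 1) (h2 : ∑ y ∈ s, w₂ y = 1)
    (he : ∑ y ∈ s, w₁ y • y = ∑ y ∈ s, w₂ y • y) :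
    ∀ y ∈ s, w₁ y = w₂ y := by
  intro y hy
  have := hs.eq_of_sum_eq_sum (s := s.attach)
    (w₁ := fun i => w₁ ↑i) (w₂ := fun i => w₂ ↑i)
    (by rw [Finset.sum_attach s fun i => w₁ i, Finset.sum_attach s fun i => w₂ i, h1, h2])
    (by rw [Finset.sum_attach s fun i => w₁ i • i, Finset.sum_attach s fun i => w₂ i • i]
        exact he)
  exact this ⟨y, hy⟩ (Finset.mem_attach _ _)

theorem stmt4 {n : ℕ} (K L : SimplicialComplex ℝ (Fin n → ℝ))
    (hKfin : K.faces.Finite) (hLfin : L.faces.Finite)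
    (hspace : L.space = K.space)
    (hsub : ∀ t ∈ L.faces, ∃ s ∈ K.faces,
      convexHull ℝ (t : Set (Fin n → ℝ)) ⊆ convexHull ℝ (s : Set (Fin n → ℝ))) :
    ∀ s ∈ K.faces,
      convexHull ℝ (s : Set (Fin n → ℝ)) =
        ⋃ t ∈ {t ∈ L.faces |
          convexHull ℝ (t : Set (Fin n → ℝ)) ⊆ convexHull ℝ (s : Set (Fin n → ℝ))},
          convexHull ℝ (t : Set (Fin n → ℝ)) := by
  classical
  intro s hs
  apply Set.Subset.antisymm
  · intro x hx
    -- weights of x on s, filtered to the positive-weight face σ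
    obtain ⟨w, hw0, hw1, hwx⟩ := mem_convexHull_finset'.mp hx
    set σ : Finset (Fin n → ℝ) := s.filter (fun y => w y ≠ 0) with hσdef
    have hσsub : σ ⊆ s := filter_subset _ _
    have hσ1 : ∑ y ∈ σ, w y = 1 := by
      rw [hσdef, Finset.sum_filter_ne_zero]; exact hw1
    have hσx : ∑ y ∈ σ, w y • y = x := by
      rw [hσdef, Finset.sum_filter_of_ne]
      · exact hwx
      · intro y _ h h0
        exact h (by rw [h0, zero_smul])
    have hσpos : ∀ y ∈ σ, 0 < w y := fun y hy =>
      lt_of_le_of_ne (hw0 y (hσsub hy)) (Ne.symm (mem_filter.mp hy).2)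
    have hσne : σ ≠ ∅ := by
      intro h; rw [h] at hσ1; simp at hσ1
    have hσK : σ ∈ K.faces := K.down_closed hs hσsub (Finset.nonempty_iff_ne_empty.mpr hσne)
    have hxσ : x ∈ convexHull ℝ (σ : Set (Fin n → ℝ)) :=
      mem_convexHull_finset'.mpr ⟨w, fun y hy => hw0 y (hσsub hy), hσ1, hσx⟩
    -- x ∈ L.space, get a face t of L with positive weights
    have hxL : x ∈ L.space := by
      rw [hspace]
      exact SimplicialComplex.mem_space_iff.mpr ⟨s, hs, hx⟩
    obtain ⟨t₁, ht₁, hxt₁⟩ := SimplicialComplex.mem_space_iff.mp hxL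
    obtain ⟨v, hv0, hv1, hvx⟩ := mem_convexHull_finset'.mp hxt₁
    set t : Finset (Fin n → ℝ) := t₁.filter (fun y => v y ≠ 0) with htdef
    have htsub : t ⊆ t₁ := filter_subset _ _
    have ht1 : ∑ y ∈ t, v y = 1 := by
      rw [htdef, Finset.sum_filter_ne_zero]; exact hv1
    have htx : ∑ y ∈ t, v y • y = x := by
      rw [htdef, Finset.sum_filter_of_ne]
      · exact hvx
      · intro y _ h h0
        exact h (by rw [h0, zero_smul])
    have htpos : ∀ y ∈ t, 0 < v y := fun y hy =>
      lt_of_le_of_ne (hv0 y (htsub hy)) (Ne.symm (mem_filter.mp hy).2)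
    have htne : t ≠ ∅ := by
      intro h; rw [h] at ht1; simp at ht1
    have htL : t ∈ L.faces := L.down_closed ht₁ htsub (Finset.nonempty_iff_ne_empty.mpr htne)
    have hxt : x ∈ convexHull ℝ (t : Set (Fin n → ℝ)) :=
      mem_convexHull_finset'.mpr ⟨v, fun y hy => hv0 y (htsub hy), ht1, htx⟩
    -- the big simplex s' of K containing t
    obtain ⟨s', hs', hts'⟩ := hsub t htL
    have hxs' : x ∈ convexHull ℝ (s' : Set (Fin n → ℝ)) := hts' hxt
    -- σ ⊆ s'
    have hσs' : σ ⊆ s' := by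
      have h1 : x ∈ convexHull ℝ ((σ ∩ s' : Finset (Fin n → ℝ)) : Set (Fin n → ℝ)) := by
        have := K.inter_subset_convexHull hσK hs' ⟨hxσ, hxs'⟩
        simpa using this
      obtain ⟨c, hc0, hc1, hcx⟩ := mem_convexHull_finset'.mp h1
      set c' : (Fin n → ℝ) → ℝ := fun y => if y ∈ σ ∩ s' then c y else 0 with hc'def
      have hc'1 : ∑ y ∈ σ, c' y = 1 := by
        rw [← hc1]
        rw [Finset.sum_ite_mem]
        apply Finset.sum_congr
        · rw [← Finset.inter_assoc, Finset.inter_self]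
        · intro y hy; rfl
      have hc'x : ∑ y ∈ σ, c' y • y = x := by
        rw [← hcx]
        rw [show (∑ y ∈ σ, c' y • y) = ∑ y ∈ σ, (if y ∈ σ ∩ s' then c y • y else 0) by
          apply Finset.sum_congr rfl; intro y hy
          by_cases h : y ∈ σ ∩ s'
          · rw [hc'def]; simp only; rw [if_pos h, if_pos h]
          · rw [hc'def]; simp only; rw [if_neg h, if_neg h, zero_smul]]
        rw [Finset.sum_ite_mem]
        apply Finset.sum_congr
        · rw [← Finset.inter_assoc, Finset.inter_self]
        · intro y hy; rfl
      intro y hy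
      have heq := unique_w' (K.indep hσK) hσ1 hc'1 (by rw [hσx, hc'x]) y hy
      have hne : c' y ≠ 0 := by
        rw [← heq]; exact (hσpos y hy).ne'
      by_contra hys'
      apply hne
      have hnm : y ∉ σ ∩ s' := fun hm => hys' (Finset.mem_inter.mp hm).2
      rw [hc'def]; simp only; rw [if_neg hnm]
    -- every vertex of t lies in conv σ
    have hvert : ∀ p ∈ t, p ∈ convexHull ℝ (σ : Set (Fin n → ℝ)) := by
      -- representations of vertices of t over s'
      have hrep : ∀ p : (Fin n → ℝ), ∃ u : (Fin n → ℝ) → ℝ, p ∈ t →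
          ((∀ y ∈ s', 0 ≤ u y) ∧ ∑ y ∈ s', u y = 1 ∧ ∑ y ∈ s', u y • y = p) := by
        intro p
        by_cases hp : p ∈ t
        · obtain ⟨u, hu⟩ := mem_convexHull_finset'.mp
            (hts' (subset_convexHull ℝ _ (Finset.mem_coe.mpr hp)))
          exact ⟨u, fun _ => hu⟩
        · exact ⟨0, fun h => absurd h hp⟩
      choose vp hvp using hrep
      -- the combined weights of x over s'
      set u : (Fin n → ℝ) → ℝ := fun i => ∑ p ∈ t, v p * vp p i with hudef
      have hu1 : ∑ i ∈ s', u i = 1 := by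
        rw [hudef]
        simp only
        rw [Finset.sum_comm]
        rw [← ht1]
        apply Finset.sum_congr rfl
        intro p hp
        rw [← Finset.mul_sum, (hvp p hp).2.1, mul_one]
      have hux : ∑ i ∈ s', u i • i = x := by
        rw [hudef]
        simp only
        rw [show (∑ i ∈ s', (∑ p ∈ t, v p * vp p i) • i)
            = ∑ i ∈ s', ∑ p ∈ t, (v p * vp p i) • i by
          apply Finset.sum_congr rfl; intro i _; rw [Finset.sum_smul]]
        rw [Finset.sum_comm, ← htx]
        apply Finset.sum_congr rfl
        intro p hp
        have : ∑ i ∈ s', (v p * vp p i) • i = v p • ∑ i ∈ s', vp p i • i := by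
          rw [Finset.smul_sum]
          apply Finset.sum_congr rfl
          intro i _
          rw [smul_smul]
        rw [this, (hvp p hp).2.2]
      -- weights of x over s' via σ
      set w' : (Fin n → ℝ) → ℝ := fun y => if y ∈ σ then w y else 0 with hw'def
      have hw'1 : ∑ y ∈ s', w' y = 1 := by
        rw [hw'def]; rw [Finset.sum_ite_mem, Finset.inter_comm,
          Finset.inter_eq_left.mpr hσs']
        exact hσ1
      have hw'x : ∑ y ∈ s', w' y • y = x := by
        rw [show (∑ y ∈ s', w' y • y) = ∑ y ∈ s', (if y ∈ σ then w y • y else 0) by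
          apply Finset.sum_congr rfl; intro y _
          by_cases h : y ∈ σ
          · rw [hw'def]; simp only; rw [if_pos h, if_pos h]
          · rw [hw'def]; simp only; rw [if_neg h, if_neg h, zero_smul]]
        rw [Finset.sum_ite_mem, Finset.inter_comm, Finset.inter_eq_left.mpr hσs']
        exact hσx
      have hkey := unique_w' (K.indep hs') hu1 hw'1 (by rw [hux, hw'x])
      -- vanishing outside σ
      have hzero : ∀ p ∈ t, ∀ i ∈ s', i ∉ σ → vp p i = 0 := by
        intro p hp i hi hiσ
        have h0 : u i = 0 := by
          rw [hkey i hi, hw'def]; simp [hiσ]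
        have := (Finset.sum_eq_zero_iff_of_nonneg (fun q hq =>
          mul_nonneg (hv0 q (htsub hq)) ((hvp q hq).1 i hi))).mp h0 p hp
        rcases mul_eq_zero.mp this with h | h
        · exact absurd h (htpos p hp).ne'
        · exact h
      intro p hp
      apply mem_convexHull_finset'.mpr
      refine ⟨vp p, fun y hy => (hvp p hp).1 y (hσs' hy), ?_, ?_⟩
      · rw [Finset.sum_subset hσs' (fun i hi hiσ => hzero p hp i hi hiσ)]
        exact (hvp p hp).2.1
      · rw [Finset.sum_subset hσs'
          (fun i hi hiσ => by rw [hzero p hp i hi hiσ, zero_smul])]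
        exact (hvp p hp).2.2
    -- conclude
    have htσ : convexHull ℝ (t : Set (Fin n → ℝ)) ⊆ convexHull ℝ (σ : Set (Fin n → ℝ)) :=
      convexHull_min (fun p hp => hvert p (Finset.mem_coe.mp hp)) (convex_convexHull _ _)
    refine Set.mem_biUnion ?_ hxt
    exact ⟨htL, htσ.trans (convexHull_mono (by exact_mod_cast hσsub))⟩
  · refine Set.iUnion₂_subset fun t ht => ht.2
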